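/- Let x = (a_1,...,a_n) and y = (b_1,...,b_n) be rook-monoid sequences with a_k = b_k for all k ≠ i and a_i < b_i. Then ℓ(y) = ℓ(x) + 1 if and only if y covers x in the Deodhar order (i.e., x <_D y and there is no z with x <_D z <_D y). -/

import Mathlib

/-- coinv: number of pairs i < j with 0 < a i < a j. -/
def coinv (n : ℕ) (a : Fin n → ℕ) : ℕ :=
  (Finset.univ.filter (fun p : Fin n × Fin n => p.1 < p.2 ∧ 0 < a p.1 ∧ a p.1 < a p.2)).card

/-- Length of a rook-monoid sequence: ∑_{i : a_i ≠ 0} (a_i + n - i) - coinv (1-based i). -/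
def rookLen (n : ℕ) (a : Fin n → ℕ) : ℤ :=
  (∑ i : Fin n, if a i ≠ 0 then ((a i : ℤ) + n - (i.val + 1)) else 0) - coinv n a

/-- A rook-monoid sequence: entries in {0,...,n} with distinct nonzero entries. -/
def IsRook (n : ℕ) (a : Fin n → ℕ) : Prop :=
  (∀ i, a i ≤ n) ∧ ∀ i j : Fin n, i ≠ j → a i ≠ 0 → a i ≠ a j

/-- Non-increasing rearrangement of a list. -/
def sortDesc (l : List ℕ) : List ℕ := l.insertionSort (· ≥ ·)

/-- Containment order: entrywise comparison of non-increasing rearrangements. -/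
def contLE (l m : List ℕ) : Prop := List.Forall₂ (· ≤ ·) (sortDesc l) (sortDesc m)

/-- Deodhar order: containment of all truncations. -/
def deodharLE (n : ℕ) (x y : Fin n → ℕ) : Prop :=
  ∀ k : ℕ, k ≤ n → contLE ((List.ofFn x).take k) ((List.ofFn y).take k)

/-- y covers x in the Deodhar order on rook-monoid sequences. -/
def deodharCovers (n : ℕ) (x y : Fin n → ℕ) : Prop :=
  deodharLE n x y ∧ x ≠ y ∧
    ¬∃ z : Fin n → ℕ, IsRook n z ∧
      deodharLE n x z ∧ x ≠ z ∧ deodharLE n z y ∧ z ≠ y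



def cnt {n : ℕ} (x : Fin n → ℕ) (k c : ℕ) : ℕ :=
  ((List.ofFn x).take k).countP (fun v => decide (c ≤ v))

lemma forall₂_count (s t : List ℕ) (h : List.Forall₂ (· ≤ ·) s t) (c : ℕ) :
    s.countP (fun v => decide (c ≤ v)) ≤ t.countP (fun v => decide (c ≤ v)) := by
  induction h with
  | nil => simp
  | cons hxy h ih =>
    rename_i x y s' t'
    rw [List.countP_cons, List.countP_cons]
    simp only [decide_eq_true_eq]
    split_ifs <;> omega

lemma count_forall₂ : ∀ s : List ℕ, s.Pairwise (· ≥ ·) → ∀ t : List ℕ, t.Pairwise (· ≥ ·) →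
    s.length = t.length →
    (∀ c, s.countP (fun v => decide (c ≤ v)) ≤ t.countP (fun v => decide (c ≤ v))) →
    List.Forall₂ (· ≤ ·) s t := by
  intro s
  induction s with
  | nil =>
    intro _ t _ hlen _
    cases t with
    | nil => exact List.Forall₂.nil
    | cons y t' => simp at hlen
  | cons x s' ih =>
    intro hs t ht hlen h
    cases t with
    | nil => simp at hlen
    | cons y t' =>
      have hs' : s'.Pairwise (· ≥ ·) := (List.pairwise_cons.mp hs).2
      have ht' : t'.Pairwise (· ≥ ·) := (List.pairwise_cons.mp ht).2
      have hsx : ∀ e ∈ s', e ≤ x := (List.pairwise_cons.mp hs).1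
      have hty : ∀ e ∈ t', e ≤ y := (List.pairwise_cons.mp ht).1
      have hxy : x ≤ y := by
        by_contra hxy
        have h1 := h x
        rw [List.countP_cons, List.countP_cons] at h1
        have h2 : t'.countP (fun v => decide (x ≤ v)) = 0 := by
          rw [List.countP_eq_zero]
          intro e he
          simp only [decide_eq_true_eq]
          have := hty e he; omega
        simp only [decide_eq_true_eq, h2] at h1
        split_ifs at h1 <;> omega
      refine List.Forall₂.cons hxy (ih hs' t' ht' (by simpa using hlen) ?_)
      intro c
      have h1 := h c
      rw [List.countP_cons, List.countP_cons] at h1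
      simp only [decide_eq_true_eq] at h1
      by_cases hcx : c ≤ x
      · have hcy : c ≤ y := le_trans hcx hxy
        rw [if_pos hcx, if_pos hcy] at h1
        omega
      · have h2 : s'.countP (fun v => decide (c ≤ v)) = 0 := by
          rw [List.countP_eq_zero]
          intro e he
          simp only [decide_eq_true_eq]
          have := hsx e he; omega
        omega

lemma contLE_iff (l m : List ℕ) :
    contLE l m ↔ l.length = m.length ∧
      ∀ c, l.countP (fun v => decide (c ≤ v)) ≤ m.countP (fun v => decide (c ≤ v)) := by
  have pl : (sortDesc l).Perm l := List.perm_insertionSort _ l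
  have pm : (sortDesc m).Perm m := List.perm_insertionSort _ m
  have sl : (sortDesc l).Pairwise (· ≥ ·) := List.pairwise_insertionSort _ l
  have sm : (sortDesc m).Pairwise (· ≥ ·) := List.pairwise_insertionSort _ m
  constructor
  · intro h
    have hlen := h.length_eq
    rw [pl.length_eq, pm.length_eq] at hlen
    refine ⟨hlen, fun c => ?_⟩
    have := forall₂_count _ _ h c
    rwa [pl.countP_eq, pm.countP_eq] at this
  · rintro ⟨hlen, h⟩
    refine count_forall₂ _ sl _ sm (by rw [pl.length_eq, pm.length_eq, hlen]) ?_
    intro c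
    rw [pl.countP_eq, pm.countP_eq]
    exact h c

lemma cnt_zero {n : ℕ} (x : Fin n → ℕ) (c : ℕ) : cnt x 0 c = 0 := by
  rfl

lemma cnt_succ {n : ℕ} (x : Fin n → ℕ) (k : ℕ) (hk : k < n) (c : ℕ) :
    cnt x (k + 1) c = cnt x k c + if c ≤ x ⟨k, hk⟩ then 1 else 0 := by
  unfold cnt
  rw [List.take_succ]
  have : (List.ofFn x)[k]? = some (x ⟨k, hk⟩) := by
    rw [List.getElem?_ofFn]
    simp [List.ofFnNthVal, hk]
  rw [this, List.countP_append]
  simp only [Option.toList_some, List.countP_cons, List.countP_nil, decide_eq_true_eq]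
  split_ifs <;> omega

lemma deodhar_iff_cnt {n : ℕ} (x y : Fin n → ℕ) :
    deodharLE n x y ↔ ∀ k ≤ n, ∀ c, cnt x k c ≤ cnt y k c := by
  unfold deodharLE
  constructor
  · intro h k hk c
    exact ((contLE_iff _ _).mp (h k hk)).2 c
  · intro h k hk
    rw [contLE_iff]
    refine ⟨?_, h k hk⟩
    simp [List.length_take]

lemma cnt_diff {n : ℕ} (x y : Fin n → ℕ) (p : Fin n) (h : ∀ j, j ≠ p → x j = y j) :
    ∀ k, k ≤ n → ∀ c, cnt x k c + (if p.val < k ∧ c ≤ y p then 1 else 0)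
      = cnt y k c + (if p.val < k ∧ c ≤ x p then 1 else 0) := by
  intro k
  induction k with
  | zero => intro _ c; simp [cnt_zero]
  | succ k ih =>
    intro hk c
    have hk' : k < n := hk
    have ihc := ih (le_of_lt hk') c
    rw [cnt_succ x k hk' c, cnt_succ y k hk' c]
    by_cases hp : (⟨k, hk'⟩ : Fin n) = p
    · have hpk : p.val = k := by rw [← hp]
      rw [hp]
      have h1 : ¬ (p.val < k ∧ c ≤ y p) := fun hc => by omega
      have h1' : ¬ (p.val < k ∧ c ≤ x p) := fun hc => by omega
      have h2 : (p.val < k + 1 ∧ c ≤ y p) ↔ c ≤ y p := by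
        constructor
        · exact fun hc => hc.2
        · exact fun hc => ⟨by omega, hc⟩
      have h2' : (p.val < k + 1 ∧ c ≤ x p) ↔ c ≤ x p := by
        constructor
        · exact fun hc => hc.2
        · exact fun hc => ⟨by omega, hc⟩
      rw [if_neg h1, if_neg h1'] at ihc
      rw [if_congr h2 rfl rfl, if_congr h2' rfl rfl]
      split_ifs <;> omega
    · have hxy : x ⟨k, hk'⟩ = y ⟨k, hk'⟩ := h _ hp
      have hpk : p.val ≠ k := fun hc => hp (Fin.ext hc.symm)
      have h3 : (p.val < k + 1 ∧ c ≤ y p) ↔ (p.val < k ∧ c ≤ y p) := by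
        constructor <;> (rintro ⟨h4, h5⟩; exact ⟨by omega, h5⟩)
      have h4 : (p.val < k + 1 ∧ c ≤ x p) ↔ (p.val < k ∧ c ≤ x p) := by
        constructor <;> (rintro ⟨h4, h5⟩; exact ⟨by omega, h5⟩)
      rw [hxy, if_congr h3 rfl rfl, if_congr h4 rfl rfl]
      omega

lemma deodhar_single {n : ℕ} (x y : Fin n → ℕ) (p : Fin n)
    (h : ∀ j, j ≠ p → x j = y j) (hle : x p ≤ y p) : deodharLE n x y := by
  rw [deodhar_iff_cnt]
  intro k hk c
  have := cnt_diff x y p h k hk c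
  have h2 : (if p.val < k ∧ c ≤ x p then 1 else 0) ≤ (if p.val < k ∧ c ≤ y p then 1 else 0) := by
    split_ifs with h3 h4
    · omega
    · exact absurd ⟨h3.1, le_trans h3.2 hle⟩ h4
    all_goals omega
  omega

lemma cnt_succ' {n : ℕ} (x : Fin n → ℕ) (j : Fin n) (c : ℕ) :
    cnt x (j.val + 1) c = cnt x j.val c + if c ≤ x j then 1 else 0 := by
  have := cnt_succ x j.val j.isLt c
  simpa using this

section main
variable {n : ℕ} {a b : Fin n → ℕ} (ha : IsRook n a) (hb : IsRook n b) (i : Fin n)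
  (hne : ∀ k, k ≠ i → a k = b k) (hlt : a i < b i)

/-- The combinatorial condition equivalent to both `Δℓ = 1` and covering. -/
def RCond (n : ℕ) (a : Fin n → ℕ) (i : Fin n) (u v : ℕ) : Prop :=
  (∀ w, u < w → w < v → ∃ j : Fin n, j < i ∧ a j = w) ∧
  (∀ j : Fin n, i < j → v < a j ∨ (0 < u ∧ a j < u))

include hne hlt in
lemma cond_covers (ha : IsRook n a) (hb : IsRook n b)
    (hcond : RCond n a i (a i) (b i)) : deodharCovers n a b := by
  obtain ⟨hc1, hc2⟩ := hcond
  refine ⟨deodhar_single a b i (fun j hj => hne j hj) (le_of_lt hlt), ?_, ?_⟩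
  · intro h
    exact absurd (congrFun h i) (ne_of_lt hlt)
  rintro ⟨z, hz, haz, hazne, hzb, hzbne⟩
  rw [deodhar_iff_cnt] at haz hzb
  -- off-box values of cnt z agree with cnt a
  have key : ∀ k, k ≤ n → ∀ c, ¬(i.val < k ∧ a i < c ∧ c ≤ b i) → cnt z k c = cnt a k c := by
    intro k hk c hoff
    have hd := cnt_diff a b i hne k hk c
    have h1 := haz k hk c
    have h2 := hzb k hk c
    split_ifs at hd <;> omega
  have hlev : ∀ (j : Fin n) (c : ℕ), ¬(i.val < j.val ∧ a i < c ∧ c ≤ b i) →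
      ¬(i.val < j.val + 1 ∧ a i < c ∧ c ≤ b i) → (c ≤ z j ↔ c ≤ a j) := by
    intro j c ho1 ho2
    have e1 := key j.val (le_of_lt j.isLt) c ho1
    have e2 := key (j.val + 1) j.isLt c ho2
    have s1 := cnt_succ' z j c
    have s2 := cnt_succ' a j c
    constructor <;> intro hc
    · by_contra hc2
      rw [if_pos hc] at s1
      rw [if_neg hc2] at s2
      omega
    · by_contra hc2
      rw [if_neg hc2] at s1
      rw [if_pos hc] at s2
      omega
  -- z agrees with a off i
  have hzja : ∀ j : Fin n, j ≠ i → z j = a j := by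
    intro j hj
    rcases lt_or_gt_of_ne (Fin.val_ne_of_ne hj) with hji | hji
    · -- j < i : all thresholds off-box
      have l1 := hlev j (a j) (by omega) (by omega)
      have l2 := hlev j (a j + 1) (by omega) (by omega)
      have := l1.mpr le_rfl
      have h2 : ¬ (a j + 1 ≤ a j) := by omega
      have := fun hc => h2 (l2.mp hc)
      omega
    · -- i < j : use Cond part 2
      rcases hc2 j (by exact hji) with hcase | hcase
      · have l1 := hlev j (a j) (by omega) (by omega)
        have l2 := hlev j (a j + 1) (by omega) (by omega)
        have := l1.mpr le_rfl
        have h2 : ¬ (a j + 1 ≤ a j) := by omega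
        have := fun hc => h2 (l2.mp hc)
        omega
      · have l1 := hlev j (a j) (by omega) (by omega)
        have l2 := hlev j (a j + 1) (by omega) (by omega)
        have := l1.mpr le_rfl
        have h2 : ¬ (a j + 1 ≤ a j) := by omega
        have := fun hc => h2 (l2.mp hc)
        omega
  -- bounds on z i
  have hub : z i ≤ b i := by
    have l1 := hlev i (b i + 1) (by omega) (by omega)
    have h2 : ¬ (b i + 1 ≤ a i) := by omega
    have := fun hc => h2 (l1.mp hc)
    omega
  have hlb : a i ≤ z i := by
    rcases Nat.eq_zero_or_pos (a i) with h0 | h0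
    · omega
    · have l1 := hlev i (a i) (by omega) (by omega)
      exact l1.mpr le_rfl
  have hmid : ¬ (a i < z i ∧ z i < b i) := by
    rintro ⟨hm1, hm2⟩
    obtain ⟨j, hji, hja⟩ := hc1 (z i) hm1 hm2
    have hjne : j ≠ i := ne_of_lt hji
    have : z j = z i := by rw [hzja j hjne, hja]
    exact absurd this.symm (hz.2 i j (fun hc => hjne hc.symm) (by omega))
  have : z i = a i ∨ z i = b i := by omega
  rcases this with hzi | hzi
  · apply hazne
    funext j
    by_cases hj : j = i
    · rw [hj, hzi]
    · exact (hzja j hj).symm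
  · apply hzbne
    funext j
    by_cases hj : j = i
    · rw [hj, hzi]
    · rw [hzja j hj]; exact hne j hj

end main

section wit
variable {n : ℕ} {a b : Fin n → ℕ}

lemma covers_cond (ha : IsRook n a) (hb : IsRook n b) (i : Fin n)
    (hne : ∀ k, k ≠ i → a k = b k) (hlt : a i < b i)
    (hcov : deodharCovers n a b) : RCond n a i (a i) (b i) := by
  by_contra hcond
  apply hcov.2.2
  by_cases hA : ∃ j : Fin n, i < j ∧ a i < a j ∧ a j < b i
  · -- witness z₃ : swap-type
    obtain ⟨j0, hij0, hu, hv⟩ := hA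
    have hij0' : i.val < j0.val := hij0
    have hj0i : j0 ≠ i := fun hc => by rw [hc] at hij0'; omega
    set m : Fin n → ℕ := Function.update a i (b i) with hm
    set z : Fin n → ℕ := Function.update m j0 (a i) with hzdef
    have hzj0 : z j0 = a i := Function.update_self _ _ _
    have hzi : z i = b i := by
      rw [hzdef, Function.update_of_ne (fun hc => hj0i hc.symm), hm, Function.update_self]
    have hzk : ∀ k, k ≠ i → k ≠ j0 → z k = a k := by
      intro k hk1 hk2
      rw [hzdef, Function.update_of_ne hk2, hm, Function.update_of_ne hk1]
    have hane : ∀ k, k ≠ i → a k ≠ b i := by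
      intro k hk hc
      have h0 : a k ≠ 0 := by omega
      have := hb.2 k i hk (by rw [← hne k hk]; exact h0)
      rw [← hne k hk] at this
      exact this hc
    refine ⟨z, ⟨?_, ?_⟩, ?_, ?_, ?_, ?_⟩
    · intro k
      by_cases h1 : k = i
      · rw [h1, hzi]; exact hb.1 i
      by_cases h2 : k = j0
      · rw [h2, hzj0]; exact ha.1 i
      · rw [hzk k h1 h2]; exact ha.1 k
    · intro p q hpq hp0
      by_cases hp1 : p = i
      · subst hp1
        rw [hzi]
        by_cases hq2 : q = j0
        · rw [hq2, hzj0]; omega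
        · rw [hzk q (fun hc => hpq hc.symm) hq2]
          exact fun hc => hane q (fun hc2 => hpq hc2.symm) hc.symm
      by_cases hp2 : p = j0
      · subst hp2
        rw [hzj0]
        rw [hzj0] at hp0
        by_cases hq1 : q = i
        · rw [hq1, hzi]; omega
        · rw [hzk q hq1 (fun hc => hpq hc.symm)]
          exact ha.2 i q (fun hc => hq1 hc.symm) hp0
      · rw [hzk p hp1 hp2]
        rw [hzk p hp1 hp2] at hp0
        by_cases hq1 : q = i
        · rw [hq1, hzi]; exact hane p hp1
        by_cases hq2 : q = j0
        · rw [hq2, hzj0]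
          intro hc
          exact (ha.2 p i hp1 hp0) hc
        · rw [hzk q hq1 hq2]
          exact ha.2 p q hpq hp0
    · -- a ≤ z
      rw [deodhar_iff_cnt]
      intro k hk c
      have d1 := cnt_diff a m i (fun j hj => (Function.update_of_ne hj _ _).symm) k hk c
      have d2 := cnt_diff m z j0 (fun j hj => (Function.update_of_ne hj _ _).symm) k hk c
      have hmi : m i = b i := Function.update_self _ _ _
      have hmj0 : m j0 = a j0 := Function.update_of_ne hj0i _ _
      rw [hmi] at d1
      rw [hmj0, hzj0] at d2
      split_ifs at d1 d2 <;> omega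
    · intro hc
      have := congrFun hc i
      rw [hzi] at this
      omega
    · -- z ≤ b
      refine deodhar_single z b j0 ?_ ?_
      · intro j hj
        by_cases hj1 : j = i
        · rw [hj1, hzi]
        · rw [hzk j hj1 hj, hne j hj1]
      · rw [hzj0, ← hne j0 hj0i]
        omega
    · intro hc
      have := congrFun hc j0
      rw [hzj0, ← hne j0 hj0i] at this
      omega
  by_cases hB : a i = 0 ∧ ∃ j : Fin n, i < j ∧ a j = 0
  · -- witness z₂ : move the new value to a later zero
    obtain ⟨hu0, j0, hij0, hj00⟩ := hB
    have hij0' : i.val < j0.val := hij0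
    have hj0i : j0 ≠ i := fun hc => by rw [hc] at hij0'; omega
    set z : Fin n → ℕ := Function.update a j0 (b i) with hzdef
    have hzj0 : z j0 = b i := Function.update_self _ _ _
    have hzk : ∀ k, k ≠ j0 → z k = a k := by
      intro k hk
      rw [hzdef, Function.update_of_ne hk]
    have hane : ∀ k, k ≠ i → a k ≠ b i := by
      intro k hk hc
      have h0 : a k ≠ 0 := by omega
      have := hb.2 k i hk (by rw [← hne k hk]; exact h0)
      rw [← hne k hk] at this
      exact this hc
    refine ⟨z, ⟨?_, ?_⟩, ?_, ?_, ?_, ?_⟩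
    · intro k
      by_cases h2 : k = j0
      · rw [h2, hzj0]; exact hb.1 i
      · rw [hzk k h2]; exact ha.1 k
    · intro p q hpq hp0
      by_cases hp2 : p = j0
      · rw [hp2, hzj0]
        by_cases hq1 : q = i
        · rw [hq1, hzk i (fun hc => hj0i hc.symm), hu0]; omega
        by_cases hq2 : q = j0
        · exact absurd (hp2.trans hq2.symm) hpq
        · rw [hzk q hq2]
          exact fun hc => hane q hq1 hc.symm
      · rw [hzk p hp2]
        rw [hzk p hp2] at hp0
        by_cases hq2 : q = j0
        · rw [hq2, hzj0]
          intro hc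
          by_cases hp1 : p = i
          · rw [hp1, hu0] at hc; omega
          · exact hane p hp1 hc
        · rw [hzk q hq2]
          exact ha.2 p q hpq hp0
    · exact deodhar_single a z j0 (fun j hj => (hzk j hj).symm) (by rw [hzj0, hj00]; omega)
    · intro hc
      have := congrFun hc j0
      rw [hzj0, hj00] at this
      omega
    · rw [deodhar_iff_cnt]
      intro k hk c
      have d1 := cnt_diff a z j0 (fun j hj => (hzk j hj).symm) k hk c
      have d2 := cnt_diff a b i hne k hk c
      rw [hzj0] at d1
      rw [hj00] at d1
      rw [hu0] at d2
      split_ifs at d1 d2 <;> omega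
    · intro hc
      have := congrFun hc i
      rw [hzk i (fun hc2 => hj0i hc2.symm), hu0] at this
      omega
  · -- remaining case : a free value w strictly between
    rw [RCond, not_and_or] at hcond
    have hpart2 : ∀ j : Fin n, i < j → b i < a j ∨ (0 < a i ∧ a j < a i) := by
      intro j hj
      have h1 : ¬ (a i < a j ∧ a j < b i) := fun hc => hA ⟨j, hj, hc.1, hc.2⟩
      have h2 : ¬ (a i = 0 ∧ a j = 0) := fun hc => hB ⟨hc.1, j, hj, hc.2⟩
      have hjne : j ≠ i := fun hc => by rw [hc] at hj; exact absurd hj (lt_irrefl i)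
      have h3 : a j ≠ b i := by
        intro hc
        have h0 : a j ≠ 0 := by omega
        have := hb.2 j i hjne (by rw [← hne j hjne]; exact h0)
        rw [← hne j hjne] at this
        exact this hc
      have h4 : a j ≠ a i ∨ a i = 0 := by
        by_cases h5 : a i = 0
        · right; exact h5
        · left; intro hc
          exact (ha.2 j i hjne (by omega)) hc
      omega
    rcases hcond with hcond | hcond
    · push_neg at hcond
      obtain ⟨w, hw1, hw2, hw3⟩ := hcond
      have hfree : ∀ j, a j ≠ w := by
        intro j
        rcases lt_trichotomy j i with hj | hj | hj
        · exact hw3 j hj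
        · rw [hj]; omega
        · rcases hpart2 j hj with h | h <;> omega
      refine ⟨Function.update a i w, ⟨?_, ?_⟩, ?_, ?_, ?_, ?_⟩
      · intro k
        by_cases h1 : k = i
        · rw [h1, Function.update_self]
          have := hb.1 i; omega
        · rw [Function.update_of_ne h1]; exact ha.1 k
      · intro p q hpq hp0
        by_cases hp1 : p = i
        · subst hp1
          rw [Function.update_self]
          rw [Function.update_of_ne (fun hc => hpq hc.symm)]
          exact fun hc => hfree q hc.symm
        · rw [Function.update_of_ne hp1]
          rw [Function.update_of_ne hp1] at hp0
          by_cases hq1 : q = i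
          · rw [hq1, Function.update_self]
            exact fun hc => hfree p hc
          · rw [Function.update_of_ne hq1]
            exact ha.2 p q hpq hp0
      · exact deodhar_single a _ i (fun j hj => (Function.update_of_ne hj _ _).symm)
          (by rw [Function.update_self]; omega)
      · intro hc
        have := congrFun hc i
        rw [Function.update_self] at this
        omega
      · refine deodhar_single _ b i ?_ ?_
        · intro j hj
          rw [Function.update_of_ne hj]; exact hne j hj
        · rw [Function.update_self]; omega
      · intro hc
        have := congrFun hc i
        rw [Function.update_self] at this
        omega
    · exfalso
      apply hcond
      intro j hj
      exact hpart2 j hj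

end wit

section count
variable {n : ℕ}

lemma coinv_int (a : Fin n → ℕ) : ((coinv n a : ℤ)) =
    ∑ p : Fin n × Fin n, if p.1.val < p.2.val ∧ 0 < a p.1 ∧ a p.1 < a p.2 then (1:ℤ) else 0 := by
  rw [coinv, Finset.card_filter]
  push_cast
  apply Finset.sum_congr rfl
  intro p _
  simp only [Fin.lt_def]

lemma card_filter_int (P : Fin n → Prop) [DecidablePred P] :
    ((Finset.univ.filter P).card : ℤ) = ∑ j : Fin n, if P j then (1:ℤ) else 0 := by
  rw [Finset.card_filter]
  push_cast
  apply Finset.sum_congr rfl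
  intro p _
  split_ifs <;> simp

lemma sum_cross (i : Fin n) (d : Fin n → Fin n → ℤ)
    (h0 : ∀ p q, p ≠ i → q ≠ i → d p q = 0) (hii : d i i = 0) :
    ∑ p : Fin n × Fin n, d p.1 p.2 = (∑ q, d i q) + ∑ p, d p i := by
  rw [Fintype.sum_prod_type]
  have step : ∀ p : Fin n, (∑ q, d p q) = (if p = i then ∑ q, d i q else d p i) := by
    intro p
    by_cases hp : p = i
    · rw [hp, if_pos rfl]
    · rw [if_neg hp]
      apply Finset.sum_eq_single i
      · intro q _ hq; exact h0 p q hp hq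
      · intro hni; exact absurd (Finset.mem_univ i) hni
  rw [Finset.sum_congr rfl (fun p _ => step p)]
  have step2 : ∀ p : Fin n, (if p = i then ∑ q, d i q else d p i)
      = d p i + (if p = i then (∑ q, d i q) - d i i else 0) := by
    intro p
    by_cases hp : p = i
    · rw [if_pos hp, if_pos hp, hp]; ring
    · rw [if_neg hp, if_neg hp]; ring
  rw [Finset.sum_congr rfl (fun p _ => step2 p), Finset.sum_add_distrib,
    Fintype.sum_ite_eq' i (fun _ => (∑ q, d i q) - d i i), hii]
  ring

variable {a b : Fin n → ℕ}

lemma len_iff_cond (ha : IsRook n a) (hb : IsRook n b) (i : Fin n)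
    (hne : ∀ k, k ≠ i → a k = b k) (hlt : a i < b i) :
    (rookLen n b = rookLen n a + 1) ↔ RCond n a i (a i) (b i) := by
  have hvn : b i ≤ n := hb.1 i
  have hfact : ∀ j : Fin n, j ≠ i → a j = 0 ∨ (a j ≠ b i ∧ a j ≠ a i) := by
    intro j hj
    rcases Nat.eq_zero_or_pos (a j) with h0 | h0
    · left; exact h0
    · right
      constructor
      · intro hc
        have := hb.2 j i hj (by rw [← hne j hj]; omega)
        rw [← hne j hj] at this
        exact this hc
      · exact ha.2 j i hj (by omega)
  -- the sum part
  have hsum : (∑ j : Fin n, if b j ≠ 0 then ((b j:ℤ) + n - (j.val + 1)) else 0)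
      - (∑ j : Fin n, if a j ≠ 0 then ((a j:ℤ) + n - (j.val + 1)) else 0)
      = ((b i:ℤ) + n - (i.val + 1)) - (if a i ≠ 0 then ((a i:ℤ) + n - (i.val + 1)) else 0) := by
    rw [← Finset.sum_sub_distrib]
    rw [Finset.sum_eq_single i]
    · rw [if_pos (by omega : b i ≠ 0)]
    · intro j _ hj
      rw [hne j hj]
      ring
    · intro hni; exact absurd (Finset.mem_univ i) hni
  -- the coinv part
  set g : Fin n → ℤ := fun j =>
    ((if i.val < j.val ∧ b i < a j then (1:ℤ) else 0)
      - (if i.val < j.val ∧ 0 < a i ∧ a i < a j then (1:ℤ) else 0))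
    + ((if j.val < i.val ∧ 0 < a j ∧ a j < b i then (1:ℤ) else 0)
      - (if j.val < i.val ∧ 0 < a j ∧ a j < a i then (1:ℤ) else 0)) with hg
  have hcoinv : (coinv n b : ℤ) - coinv n a = ∑ j, g j := by
    have h0 : ∀ p q : Fin n, p ≠ i → q ≠ i →
        ((if p.val < q.val ∧ 0 < b p ∧ b p < b q then (1:ℤ) else 0)
          - (if p.val < q.val ∧ 0 < a p ∧ a p < a q then (1:ℤ) else 0)) = 0 := by
      intro p q hp hq
      rw [← hne p hp, ← hne q hq]
      ring
    have hii : ((if i.val < i.val ∧ 0 < b i ∧ b i < b i then (1:ℤ) else 0)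
          - (if i.val < i.val ∧ 0 < a i ∧ a i < a i then (1:ℤ) else 0)) = 0 := by
      simp
    have key := sum_cross i (fun p q =>
      (if p.val < q.val ∧ 0 < b p ∧ b p < b q then (1:ℤ) else 0)
      - (if p.val < q.val ∧ 0 < a p ∧ a p < a q then (1:ℤ) else 0)) h0 hii
    rw [coinv_int, coinv_int, ← Finset.sum_sub_distrib]
    refine Eq.trans key ?_
    rw [← Finset.sum_add_distrib]
    apply Finset.sum_congr rfl
    intro j _
    beta_reduce
    rw [hg]
    beta_reduce
    have hbi : 0 < b i := by omega
    by_cases hj : j = i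
    · subst hj
      split_ifs <;> omega
    · rw [← hne j hj]
      split_ifs <;> omega
  have hD : rookLen n b - rookLen n a = ((b i:ℤ) + n - (i.val + 1))
      - (if a i ≠ 0 then ((a i:ℤ) + n - (i.val + 1)) else 0) - ∑ j, g j := by
    rw [rookLen, rookLen, ← hsum, ← hcoinv]
    ring
  -- interval splitting
  have hioo : (Finset.Ioo (a i) (b i)).card
      = (Finset.univ.filter (fun j : Fin n => j.val < i.val ∧ a i < a j ∧ a j < b i)).card
      + (Finset.univ.filter (fun j : Fin n => i.val < j.val ∧ a i < a j ∧ a j < b i)).card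
      + ((Finset.Ioo (a i) (b i)).filter (fun w => ¬∃ j, a j = w)).card := by
    have himg : (Finset.Ioo (a i) (b i)).filter (fun w => ∃ j, a j = w)
        = (Finset.univ.filter (fun j : Fin n => a i < a j ∧ a j < b i)).image a := by
      ext w
      simp only [Finset.mem_filter, Finset.mem_Ioo, Finset.mem_image, Finset.mem_univ, true_and]
      constructor
      · rintro ⟨⟨h1, h2⟩, j, rfl⟩
        exact ⟨j, ⟨h1, h2⟩, rfl⟩
      · rintro ⟨j, ⟨h1, h2⟩, rfl⟩
        exact ⟨⟨h1, h2⟩, j, rfl⟩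
    have hinj : ((Finset.univ.filter (fun j : Fin n => a i < a j ∧ a j < b i)).image a).card
        = (Finset.univ.filter (fun j : Fin n => a i < a j ∧ a j < b i)).card := by
      apply Finset.card_image_of_injOn
      intro j hj j' hj' hjj
      rw [Finset.mem_coe, Finset.mem_filter] at hj hj'
      by_contra hne'
      exact (ha.2 j j' hne' (by omega)) hjj
    have hsplit : (Finset.univ.filter (fun j : Fin n => a i < a j ∧ a j < b i)).card
        = (Finset.univ.filter (fun j : Fin n => j.val < i.val ∧ a i < a j ∧ a j < b i)).card
        + (Finset.univ.filter (fun j : Fin n => i.val < j.val ∧ a i < a j ∧ a j < b i)).card := by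
      rw [Finset.card_filter, Finset.card_filter, Finset.card_filter, ← Finset.sum_add_distrib]
      apply Finset.sum_congr rfl
      intro j _
      by_cases hj : j = i
      · subst hj
        split_ifs <;> omega
      · have hvij : j.val ≠ i.val := Fin.val_ne_of_ne hj
        split_ifs <;> omega
    have := Finset.card_filter_add_card_filter_not
      (s := Finset.Ioo (a i) (b i)) (p := fun w => ∃ j, a j = w)
    rw [himg, hinj, hsplit] at this
    omega
  rcases Nat.eq_zero_or_pos (a i) with hu0 | hu0
  · -- a i = 0
    have e1 : ∑ j, g j
        = ((Finset.univ.filter (fun j : Fin n => i.val < j.val ∧ b i < a j)).card : ℤ)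
        + ((Finset.univ.filter (fun j : Fin n => j.val < i.val ∧ a i < a j ∧ a j < b i)).card : ℤ) := by
      rw [card_filter_int, card_filter_int, ← Finset.sum_add_distrib]
      apply Finset.sum_congr rfl
      intro j _
      rw [hg]
      beta_reduce
      rw [hu0]
      split_ifs <;> omega
    have e2 : (Finset.univ.filter (fun j : Fin n => i.val < j.val)).card
        = (Finset.univ.filter (fun j : Fin n => i.val < j.val ∧ a j = 0)).card
        + (Finset.univ.filter (fun j : Fin n => i.val < j.val ∧ a i < a j ∧ a j < b i)).card
        + (Finset.univ.filter (fun j : Fin n => i.val < j.val ∧ b i < a j)).card := by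
      rw [Finset.card_filter, Finset.card_filter, Finset.card_filter, Finset.card_filter,
        ← Finset.sum_add_distrib, ← Finset.sum_add_distrib]
      apply Finset.sum_congr rfl
      intro j _
      by_cases hj : j = i
      · subst hj
        split_ifs <;> omega
      · have hvij : j.val ≠ i.val := Fin.val_ne_of_ne hj
        rcases hfact j hj with hf | hf
        · split_ifs <;> omega
        · split_ifs <;> omega
    have e3 : (Finset.univ.filter (fun j : Fin n => i.val < j.val)).card = n - 1 - i.val := by
      have : (Finset.univ.filter (fun j : Fin n => i.val < j.val)) = Finset.Ioi i := by
        ext j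
        rw [Finset.mem_filter, Finset.mem_Ioi, Fin.lt_def]
        constructor
        · rintro ⟨_, h⟩; exact h
        · intro h; exact ⟨Finset.mem_univ j, h⟩
      rw [this, Fin.card_Ioi]
    have hcioo : (Finset.Ioo (a i) (b i)).card = b i - a i - 1 := Nat.card_Ioo _ _
    have hiv : i.val < n := i.isLt
    have hcond : RCond n a i (a i) (b i) ↔
        (((Finset.Ioo (a i) (b i)).filter (fun w => ¬∃ j, a j = w)).card = 0
        ∧ (Finset.univ.filter (fun j : Fin n => i.val < j.val ∧ a i < a j ∧ a j < b i)).card = 0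
        ∧ (Finset.univ.filter (fun j : Fin n => i.val < j.val ∧ a j = 0)).card = 0) := by
      constructor
      · rintro ⟨h1, h2⟩
        refine ⟨?_, ?_, ?_⟩
        · rw [Finset.card_eq_zero, Finset.filter_eq_empty_iff]
          intro w hw
          rw [Finset.mem_Ioo] at hw
          obtain ⟨j, hj1, hj2⟩ := h1 w hw.1 hw.2
          intro hc
          exact hc ⟨j, hj2⟩
        · rw [Finset.card_eq_zero, Finset.filter_eq_empty_iff]
          rintro j _ ⟨hc1, hc2, hc3⟩
          rcases h2 j hc1 with h | h <;> omega
        · rw [Finset.card_eq_zero, Finset.filter_eq_empty_iff]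
          rintro j _ ⟨hc1, hc2⟩
          rcases h2 j hc1 with h | h <;> omega
      · rintro ⟨hF, hA, hZ⟩
        rw [Finset.card_eq_zero, Finset.filter_eq_empty_iff] at hF hA hZ
        constructor
        · intro w hw1 hw2
          have hex : ∃ j, a j = w := by
            by_contra hno
            exact hF (Finset.mem_Ioo.mpr ⟨hw1, hw2⟩) hno
          obtain ⟨j, hj⟩ := hex
          have hji : j ≠ i := by
            intro hc
            rw [hc] at hj
            omega
          have hvij : j.val ≠ i.val := Fin.val_ne_of_ne hji
          rcases Nat.lt_or_ge j.val i.val with hlt2 | hge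
          · exact ⟨j, hlt2, hj⟩
          · exfalso
            exact hA (Finset.mem_univ j) ⟨by omega, by omega, by omega⟩
        · intro j hj
          have hj' : i.val < j.val := hj
          have h1 := fun hc => hA (Finset.mem_univ j) hc
          have h2 := fun hc => hZ (Finset.mem_univ j) hc
          have hji : j ≠ i := by
            intro hc
            rw [hc] at hj'
            omega
          rcases hfact j hji with hf | hf
          · exfalso; exact h2 ⟨hj', hf⟩
          · left
            by_contra hc
            exact h1 ⟨hj', by omega, by omega⟩
    rw [hcond]
    rw [hu0] at hD
    simp only [ne_eq, not_true_eq_false, if_false] at hD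
    omega
  · -- a i > 0
    have e1 : ∑ j, g j
        = ((Finset.univ.filter (fun j : Fin n => j.val < i.val ∧ a i < a j ∧ a j < b i)).card : ℤ)
        - ((Finset.univ.filter (fun j : Fin n => i.val < j.val ∧ a i < a j ∧ a j < b i)).card : ℤ) := by
      rw [card_filter_int, card_filter_int, ← Finset.sum_sub_distrib]
      apply Finset.sum_congr rfl
      intro j _
      rw [hg]
      beta_reduce
      by_cases hj : j = i
      · subst hj
        split_ifs <;> omega
      · have hvij : j.val ≠ i.val := Fin.val_ne_of_ne hj
        rcases hfact j hj with hf | hf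
        · split_ifs <;> omega
        · split_ifs <;> omega
    have hcioo : (Finset.Ioo (a i) (b i)).card = b i - a i - 1 := Nat.card_Ioo _ _
    have hiv : i.val < n := i.isLt
    have hcond : RCond n a i (a i) (b i) ↔
        (((Finset.Ioo (a i) (b i)).filter (fun w => ¬∃ j, a j = w)).card = 0
        ∧ (Finset.univ.filter (fun j : Fin n => i.val < j.val ∧ a i < a j ∧ a j < b i)).card = 0) := by
      constructor
      · rintro ⟨h1, h2⟩
        refine ⟨?_, ?_⟩
        · rw [Finset.card_eq_zero, Finset.filter_eq_empty_iff]
          intro w hw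
          rw [Finset.mem_Ioo] at hw
          obtain ⟨j, hj1, hj2⟩ := h1 w hw.1 hw.2
          intro hc
          exact hc ⟨j, hj2⟩
        · rw [Finset.card_eq_zero, Finset.filter_eq_empty_iff]
          rintro j _ ⟨hc1, hc2, hc3⟩
          rcases h2 j hc1 with h | h <;> omega
      · rintro ⟨hF, hA⟩
        rw [Finset.card_eq_zero, Finset.filter_eq_empty_iff] at hF hA
        constructor
        · intro w hw1 hw2
          have hex : ∃ j, a j = w := by
            by_contra hno
            exact hF (Finset.mem_Ioo.mpr ⟨hw1, hw2⟩) hno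
          obtain ⟨j, hj⟩ := hex
          have hji : j ≠ i := by
            intro hc
            rw [hc] at hj
            omega
          have hvij : j.val ≠ i.val := Fin.val_ne_of_ne hji
          rcases Nat.lt_or_ge j.val i.val with hlt2 | hge
          · exact ⟨j, hlt2, hj⟩
          · exfalso
            exact hA (Finset.mem_univ j) ⟨by omega, by omega, by omega⟩
        · intro j hj
          have hj' : i.val < j.val := hj
          have h1 := fun hc => hA (Finset.mem_univ j) hc
          have hji : j ≠ i := by
            intro hc
            rw [hc] at hj'
            omega
          rcases hfact j hji with hf | hf
          · right; omega
          · by_contra hc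
            push_neg at hc
            exact h1 ⟨hj', by omega, by omega⟩
    rw [hcond]
    rw [if_pos (by omega : a i ≠ 0)] at hD
    omega

end count

theorem raise_len_iff_covers (n : ℕ) (a b : Fin n → ℕ) (ha : IsRook n a) (hb : IsRook n b)
    (i : Fin n) (hne : ∀ k, k ≠ i → a k = b k) (hlt : a i < b i) :
    rookLen n b = rookLen n a + 1 ↔ deodharCovers n a b := by
  rw [len_iff_cond ha hb i hne hlt]
  constructor
  · intro hcond
    exact cond_covers i hne hlt ha hb hcond
  · intro hcov
    exact covers_cond ha hb i hne hlt hcov
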